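/- For κ = 1 and the kernel identity underlying Perron's formula: for y > 0 with y ≠ 1 and C > 0, (1/2πi) ∫_{(C)} y^w / (w(w+1)) dw = (1 - 1/y) if y > 1, and 0 if 0 < y < 1. -/

import Mathlib

open MeasureTheory Set Filter Topology

lemma cexp_integrableOn {a : ℂ} (ha : 0 < a.re) :
    IntegrableOn (fun x : ℝ => Complex.exp (-(a * x))) (Ioi 0) := by
  apply Integrable.mono' (exp_neg_integrableOn_Ioi 0 ha)
  · exact (Complex.continuous_exp.comp (by continuity)).aestronglyMeasurable
  · filter_upwards with x
    simp [Complex.norm_exp]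

lemma cexp_integral {a : ℂ} (ha : 0 < a.re) :
    ∫ x : ℝ in Ioi (0:ℝ), Complex.exp (-(a * x)) = 1 / a := by
  have ha0 : a ≠ 0 := fun h => by simp [h] at ha
  have key : Tendsto (fun b : ℝ => ∫ x in (0:ℝ)..b, Complex.exp (-(a*x))) atTop
      (nhds (∫ x : ℝ in Ioi (0:ℝ), Complex.exp (-(a*x)))) :=
    intervalIntegral_tendsto_integral_Ioi 0 (cexp_integrableOn ha) tendsto_id
  have key2 : Tendsto (fun b : ℝ => ∫ x in (0:ℝ)..b, Complex.exp (-(a*x))) atTop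
      (nhds (1/a)) := by
    have heq : ∀ b : ℝ, ∫ x in (0:ℝ)..b, Complex.exp (-(a*x))
        = (Complex.exp (-a*b) - 1) / (-a) := by
      intro b
      have : ∀ x : ℝ, Complex.exp (-(a*x)) = Complex.exp ((-a)*x) := by
        intro x; rw [neg_mul]
      simp_rw [this]
      rw [integral_exp_mul_complex (neg_ne_zero.mpr ha0)]
      simp
    simp_rw [heq]
    have h1 : Tendsto (fun b : ℝ => Complex.exp (-a * b)) atTop (nhds 0) := by
      rw [tendsto_zero_iff_norm_tendsto_zero]
      have : ∀ b : ℝ, ‖Complex.exp (-a * b)‖ = Real.exp (-(a.re * b)) := by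
        intro b; simp [Complex.norm_exp]
      simp_rw [this]
      exact Real.tendsto_exp_atBot.comp
        (tendsto_neg_atBot_iff.mpr (Tendsto.const_mul_atTop ha tendsto_id))
    have h2 : Tendsto (fun b : ℝ => (Complex.exp (-a * b) - 1) / (-a)) atTop
        (nhds ((0 - 1) / (-a))) :=
      (h1.sub (tendsto_const_nhds (x := (1:ℂ)))).div_const (-a)
    simpa using h2
  exact tendsto_nhds_unique key key2

noncomputable def perronH (C : ℝ) : ℝ → ℂ := fun u =>
  if 0 ≤ u then Complex.exp (-((C:ℂ) * u)) - Complex.exp (-(((C:ℂ)+1) * u)) else 0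

lemma perronH_continuous (C : ℝ) : Continuous (perronH C) := by
  unfold perronH
  apply Continuous.if_le
  · exact (Complex.continuous_exp.comp (by continuity)).sub
      (Complex.continuous_exp.comp (by continuity))
  · exact continuous_const
  · exact continuous_const
  · exact continuous_id
  · intro x hx; simp [← hx]

lemma perronH_eq_indicator (C : ℝ) : perronH C =
    Set.indicator (Ici (0:ℝ))
      (fun u : ℝ => Complex.exp (-((C:ℂ) * u)) - Complex.exp (-(((C:ℂ)+1) * u))) := by
  ext u
  simp [perronH, Set.indicator_apply]

lemma perronH_integrable {C : ℝ} (hC : 0 < C) : Integrable (perronH C) := by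
  rw [perronH_eq_indicator, integrable_indicator_iff measurableSet_Ici]
  rw [IntegrableOn, ← restrict_Ioi_eq_restrict_Ici]
  exact (cexp_integrableOn (a := (C:ℂ)) (by simpa using hC)).sub
    (cexp_integrableOn (a := (C:ℂ)+1) (by simp; linarith))

lemma perronH_fourier {C : ℝ} (hC : 0 < C) (ξ : ℝ) :
    FourierTransform.fourier (perronH C) ξ =
      1 / ((C:ℂ) + 2 * Real.pi * ξ * Complex.I)
        - 1 / (((C:ℂ)+1) + 2 * Real.pi * ξ * Complex.I) := by
  rw [Real.fourier_real_eq_integral_exp_smul]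
  have key : ∀ v : ℝ, Complex.exp (↑(-2 * Real.pi * v * ξ) * Complex.I) • perronH C v
      = Set.indicator (Ici (0:ℝ))
        (fun v : ℝ => Complex.exp (-(((C:ℂ) + 2 * Real.pi * ξ * Complex.I) * v))
          - Complex.exp (-((((C:ℂ)+1) + 2 * Real.pi * ξ * Complex.I) * v))) v := by
    intro v
    rw [perronH_eq_indicator]
    by_cases hv : v ∈ Ici (0:ℝ)
    · rw [Set.indicator_of_mem hv, Set.indicator_of_mem hv, smul_eq_mul, mul_sub,
        ← Complex.exp_add, ← Complex.exp_add]
      congr 2 <;> · push_cast; ring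
    · rw [Set.indicator_of_notMem hv, Set.indicator_of_notMem hv, smul_zero]
  simp_rw [key]
  rw [MeasureTheory.integral_indicator measurableSet_Ici, ← restrict_Ioi_eq_restrict_Ici]
  have h1 : (0:ℝ) < ((C:ℂ) + 2 * Real.pi * ξ * Complex.I).re := by
    simp [hC]
  have h2 : (0:ℝ) < (((C:ℂ)+1) + 2 * Real.pi * ξ * Complex.I).re := by
    simp; linarith
  rw [MeasureTheory.integral_sub (cexp_integrableOn h1) (cexp_integrableOn h2),
    cexp_integral h1, cexp_integral h2]

lemma perronH_fourier_integrable {C : ℝ} (hC : 0 < C) :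
    Integrable (FourierTransform.fourier (perronH C)) := by
  have hane : ∀ ξ : ℝ, ((C:ℂ) + 2 * Real.pi * ξ * Complex.I) ≠ 0 := by
    intro ξ h
    have : ((C:ℂ) + 2 * Real.pi * ξ * Complex.I).re = 0 := by rw [h]; simp
    simp at this; linarith
  have hbne : ∀ ξ : ℝ, (((C:ℝ)+1 : ℂ) + 2 * Real.pi * ξ * Complex.I) ≠ 0 := by
    intro ξ h
    have : (((C:ℝ)+1 : ℂ) + 2 * Real.pi * ξ * Complex.I).re = 0 := by rw [h]; simp
    simp at this; linarith
  have hmaj : Integrable (fun ξ : ℝ => C⁻¹^2 * (1 + (2 * Real.pi / C * ξ)^2)⁻¹) :=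
    ((integrable_inv_one_add_sq.comp_mul_left'
      (R := 2 * Real.pi / C) (by positivity)).const_mul _)
  have hexp : Integrable (fun ξ : ℝ => 1 / ((C:ℂ) + 2 * Real.pi * ξ * Complex.I)
      - 1 / (((C:ℝ)+1 : ℂ) + 2 * Real.pi * ξ * Complex.I)) := by
    apply hmaj.mono'
    · apply Continuous.aestronglyMeasurable
      apply Continuous.sub
      · exact continuous_const.div (by fun_prop) hane
      · exact continuous_const.div (by fun_prop) hbne
    · filter_upwards with ξ
      set a : ℂ := (C:ℂ) + 2 * Real.pi * ξ * Complex.I with ha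
      have ha0 : a ≠ 0 := hane ξ
      have hb_eq : ((C:ℝ)+1 : ℂ) + 2 * Real.pi * ξ * Complex.I = a + 1 := by
        rw [ha]; push_cast; ring
      have hb0 : a + 1 ≠ 0 := by rw [← hb_eq]; exact hbne ξ
      have hid : 1 / a - 1 / (a + 1) = 1 / (a * (a+1)) := by
        field_simp <;> ring
      rw [hb_eq, hid]
      have hnorm_a : ‖a‖ ^ 2 = C^2 + (2 * Real.pi * ξ)^2 := by
        rw [Complex.sq_norm, Complex.normSq_apply]
        simp [ha]; ring
      have hle : C^2 + (2 * Real.pi * ξ)^2 ≤ ‖a‖ * ‖a+1‖ := by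
        rw [← hnorm_a, sq]
        apply mul_le_mul_of_nonneg_left _ (norm_nonneg a)
        have : ‖a‖ ^ 2 ≤ ‖a+1‖ ^ 2 := by
          rw [Complex.sq_norm, Complex.sq_norm, Complex.normSq_apply, Complex.normSq_apply]
          simp [ha] <;> nlinarith
        nlinarith [norm_nonneg a, norm_nonneg (a+1)]
      have hpos : (0:ℝ) < C^2 + (2 * Real.pi * ξ)^2 := by positivity
      have heq : C⁻¹^2 * (1 + (2 * Real.pi / C * ξ)^2)⁻¹ = (C^2 + (2 * Real.pi * ξ)^2)⁻¹ := by
        rw [inv_pow, ← mul_inv]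
        congr 1
        field_simp <;> ring
      rw [heq]
      rw [norm_div, norm_one, norm_mul]
      rw [one_div, inv_le_inv₀ (by nlinarith [norm_pos_iff.mpr ha0, norm_pos_iff.mpr hb0]) hpos]
      exact hle
  exact hexp.congr (Filter.Eventually.of_forall fun ξ => (perronH_fourier hC ξ).symm)

lemma perron_inversion {C : ℝ} (hC : 0 < C) (L : ℝ) :
    ∫ ξ : ℝ, Complex.exp (↑(2 * Real.pi * ξ * L) * Complex.I) •
      FourierTransform.fourier (perronH C) ξ = perronH C L := by
  have := (perronH_continuous C).fourierInv_fourier_eq (perronH_integrable hC)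
    (perronH_fourier_integrable hC)
  have hL := congrFun this L
  rw [Real.fourierInv_eq'] at hL
  simpa [RCLike.inner_apply, mul_comm, mul_assoc, mul_left_comm] using hL

/-- The Mellin–Perron kernel evaluation for `κ = 1`: for `y > 0`, `y ≠ 1`, `C > 0`,
`(1/2πi) ∫_{(C)} y^w/(w(w+1)) dw` equals `1 - 1/y` if `y > 1` and `0` if `y < 1`. -/
theorem perron_kernel_order_one (y : ℝ) (hy : 0 < y) (hy1 : y ≠ 1) (C : ℝ) (hC : 0 < C) :
    (1 / (2 * Real.pi * Complex.I)) *
        ∫ t : ℝ, ((y : ℂ) ^ ((C : ℂ) + t * Complex.I) /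
          (((C : ℂ) + t * Complex.I) * (((C : ℂ) + t * Complex.I) + 1))) * Complex.I =
      if 1 < y then 1 - 1 / (y : ℂ) else 0 := by
  set L := Real.log y with hLdef
  have hy0 : (y:ℂ) ≠ 0 := Complex.ofReal_ne_zero.mpr hy.ne'
  set g : ℝ → ℂ := fun t => Complex.exp ((L:ℂ) * ((C:ℂ) + t * Complex.I)) /
    (((C:ℂ) + t * Complex.I) * (((C:ℂ) + t * Complex.I) + 1)) with hg
  -- Step 1: rewrite the integrand using cpow = exp
  have step1 : (∫ t : ℝ, ((y : ℂ) ^ ((C : ℂ) + t * Complex.I) /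
        (((C : ℂ) + t * Complex.I) * (((C : ℂ) + t * Complex.I) + 1))) * Complex.I)
      = (∫ t : ℝ, g t) * Complex.I := by
    rw [MeasureTheory.integral_mul_const]
    congr 1
    refine MeasureTheory.integral_congr_ae (Filter.Eventually.of_forall fun t => ?_)
    have hcpow : (y:ℂ) ^ ((C:ℂ) + t * Complex.I)
        = Complex.exp ((L:ℂ) * ((C:ℂ) + t * Complex.I)) := by
      rw [Complex.cpow_def_of_ne_zero hy0, ← Complex.ofReal_log hy.le]
    simp only [hg, hcpow]
  -- Step 2: substitution t = 2πξ
  have step2 : (∫ t : ℝ, g t) = (2 * Real.pi) • ∫ ξ : ℝ, g (2 * Real.pi * ξ) := by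
    rw [MeasureTheory.Measure.integral_comp_mul_left g (2 * Real.pi), smul_smul]
    rw [abs_of_pos (by positivity : (0:ℝ) < (2 * Real.pi)⁻¹),
      mul_inv_cancel₀ (by positivity), one_smul]
  -- Step 3: identify g(2πξ) with the inverse Fourier integrand
  have step3 : ∀ ξ : ℝ, g (2 * Real.pi * ξ) = Complex.exp (↑(C * L)) *
      (Complex.exp (↑(2 * Real.pi * ξ * L) * Complex.I) •
        FourierTransform.fourier (perronH C) ξ) := by
    intro ξ
    rw [perronH_fourier hC, hg]
    beta_reduce
    have hane : ((C:ℂ) + 2 * Real.pi * ξ * Complex.I) ≠ 0 := by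
      intro h
      have : ((C:ℂ) + 2 * Real.pi * ξ * Complex.I).re = 0 := by rw [h]; simp
      simp at this; linarith
    have hbne : (((C:ℝ)+1 : ℂ) + 2 * Real.pi * ξ * Complex.I) ≠ 0 := by
      intro h
      have : (((C:ℝ)+1 : ℂ) + 2 * Real.pi * ξ * Complex.I).re = 0 := by rw [h]; simp
      simp at this; linarith
    set a : ℂ := (C:ℂ) + 2 * Real.pi * ξ * Complex.I with ha
    have hcast : ((2 * Real.pi * ξ : ℝ) : ℂ) * Complex.I = 2 * Real.pi * ξ * Complex.I := by
      push_cast; ring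
    have hb_eq : (((C:ℝ)+1 : ℂ) + 2 * Real.pi * ξ * Complex.I) = a + 1 := by
      rw [ha]; push_cast; ring
    have hb0 : a + 1 ≠ 0 := by rw [← hb_eq]; exact hbne
    have hid : 1 / a - 1 / (a + 1) = 1 / (a * (a+1)) := by
      field_simp <;> ring
    rw [hb_eq, hid]
    have hden : ((C:ℂ) + ↑(2 * Real.pi * ξ) * Complex.I) * (((C:ℂ) + ↑(2 * Real.pi * ξ) * Complex.I) + 1)
        = a * (a + 1) := by rw [ha, hcast]
    rw [hden]
    have hnum : Complex.exp ((L:ℂ) * ((C:ℂ) + ↑(2 * Real.pi * ξ) * Complex.I))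
        = Complex.exp (↑(C * L)) * Complex.exp (↑(2 * Real.pi * ξ * L) * Complex.I) := by
      rw [← Complex.exp_add]
      congr 1
      push_cast; ring
    rw [hnum, smul_eq_mul]
    field_simp
  -- Step 4: evaluate the integral
  have step4 : (∫ ξ : ℝ, g (2 * Real.pi * ξ)) = Complex.exp (↑(C * L)) * perronH C L := by
    simp_rw [step3]
    rw [MeasureTheory.integral_const_mul, perron_inversion hC]
  rw [step1, step2, step4]
  have hfinal : (1 / (2 * (Real.pi:ℂ) * Complex.I)) *
      (((2 * Real.pi : ℝ) • (Complex.exp (↑(C * L)) * perronH C L)) * Complex.I)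
      = Complex.exp (↑(C * L)) * perronH C L := by
    rw [Complex.real_smul]
    have hpi : (2 * (Real.pi:ℂ) * Complex.I) ≠ 0 := by
      simp [Real.pi_ne_zero, Complex.I_ne_zero]
    rw [one_div, inv_mul_eq_div, div_eq_iff hpi]
    push_cast
    ring
  rw [hfinal]
  by_cases hy2 : 1 < y
  · rw [if_pos hy2]
    have hL : 0 < L := Real.log_pos hy2
    rw [perronH, if_pos hL.le, mul_sub, ← Complex.exp_add, ← Complex.exp_add]
    have e1 : (↑(C * L) + -((C:ℂ) * ↑L)) = 0 := by push_cast; ring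
    have e2 : (↑(C * L) + -(((C:ℂ)+1) * ↑L)) = ↑(-L) := by push_cast; ring
    rw [e1, e2, Complex.exp_zero, ← Complex.ofReal_exp]
    rw [Real.exp_neg, Real.exp_log hy]
    push_cast
    rw [one_div]
  · rw [if_neg hy2]
    have hL : L < 0 := Real.log_neg hy (lt_of_le_of_ne (not_lt.mp hy2) hy1)
    rw [perronH, if_neg (not_le.mpr hL), mul_zero]
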